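/- arXiv:1408.5291 — 2 statements merged into one kernel-verified Lean document; each statement's English description precedes it below -/
import Mathlib

section
/- Negative dependence for upper expectations over a family of probability measures: Let 𝒫 be a family of probability measures on a measurable space (Ω, 𝓕) and define the upper expectation E[ξ] := sup_{Q ∈ 𝒫} E_Q[ξ]. If the random vectors X = (X_1,…,X_m) and Y = (Y_1,…,Y_n) are independent under each Q ∈ 𝒫, then Y is negatively dependent to X under E; that is, E[φ_1(X)φ_2(Y)] ≤ E[φ_1(X)]·E[φ_2(Y)] for every pair of test functions φ_1 ∈ C_{l,Lip}(ℝ^m), φ_2 ∈ C_{l,Lip}(ℝ^n) that are either both coordinatewise nondecreasing or both coordinatewise nonincreasing and satisfy φ_1(X) ≥ 0, E[φ_2(Y)] ≥ 0, and E[|φ_1(X)φ_2(Y)|], E[|φ_1(X)|], E[|φ_2(Y)|] < ∞. -/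
open scoped BigOperators ENNReal
open Filter

/-- The class `C_{l,Lip}(ℝ^n)` of local-Lipschitz test functions:
`|φ(x) − φ(y)| ≤ C (1 + |x|^m + |y|^m) |x − y|` for some `C > 0` and `m ∈ ℕ`. -/
def CLLip {n : ℕ} (φ : (Fin n → ℝ) → ℝ) : Prop :=
  ∃ C > (0:ℝ), ∃ m : ℕ, ∀ x y : Fin n → ℝ,
    |φ x - φ y| ≤ C * (1 + ‖x‖ ^ m + ‖y‖ ^ m) * ‖x - y‖

/-- A sub-linear expectation space `(Ω, ℋ, E)`: `ℋ` is a set of real random variables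
containing the constants and stable under composition with `C_{l,Lip}` functions, and
`E : ℋ → [-∞, ∞]` is monotone, constant preserving, sub-additive (whenever the right-hand
side is not of the form `∞ - ∞`) and positively homogeneous. -/
structure SLE (Ω : Type*) where
  H : Set (Ω → ℝ)
  E : (Ω → ℝ) → EReal
  const_mem : ∀ c : ℝ, (fun _ => c) ∈ H
  comp_mem : ∀ {n : ℕ} (X : Fin n → Ω → ℝ) (φ : (Fin n → ℝ) → ℝ),
      (∀ i, X i ∈ H) → CLLip φ → (fun ω => φ (fun i => X i ω)) ∈ H
  mono : ∀ {X Y : Ω → ℝ}, X ∈ H → Y ∈ H → (∀ ω, X ω ≤ Y ω) → E X ≤ E Y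
  const_eq : ∀ c : ℝ, E (fun _ => c) = (c : EReal)
  subadd : ∀ {X Y : Ω → ℝ}, X ∈ H → Y ∈ H →
      ¬(E X = ⊤ ∧ E Y = ⊥) → ¬(E X = ⊥ ∧ E Y = ⊤) →
      E (fun ω => X ω + Y ω) ≤ E X + E Y
  homog : ∀ {X : Ω → ℝ}, X ∈ H → ∀ l : ℝ, 0 ≤ l →
      E (fun ω => l * X ω) = (l : EReal) * E X

/-- The canonical map from `[-∞,∞]` to `[0,∞]` (faithful on nonnegative values). -/
noncomputable def erealToENNReal (x : EReal) : ℝ≥0∞ :=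
  if x = ⊤ then ⊤ else ENNReal.ofReal x.toReal

namespace SLE

variable {Ω : Type*}

/-- The conjugate (lower) expectation `ℰ[X] := -E[-X]`. -/
noncomputable def cE (S : SLE Ω) (X : Ω → ℝ) : EReal := - S.E (fun ω => - X ω)

/-- `Y` (an `n`-dimensional random vector) is independent to `X` (an `m`-dimensional
random vector) under the sub-linear expectation `E`:
`E[φ(X,Y)] = E[ E[φ(x,Y)]|_{x=X} ]` for every `φ ∈ C_{l,Lip}(ℝ^m × ℝ^n)` such that
`φ̄(x) := E[|φ(x,Y)|] < ∞` for every `x` and `E[|φ̄(X)|] < ∞`. -/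
def IndepTo (S : SLE Ω) {m n : ℕ} (X : Fin m → Ω → ℝ) (Y : Fin n → Ω → ℝ) : Prop :=
  ∀ φ : (Fin (m + n) → ℝ) → ℝ, CLLip φ →
    (∀ x : Fin m → ℝ, S.E (fun ω' => |φ (Fin.append x (fun i => Y i ω'))|) ≠ ⊤) →
    S.E (fun ω =>
      |(S.E (fun ω' => |φ (Fin.append (fun i => X i ω) (fun i => Y i ω'))|)).toReal|) ≠ ⊤ →
    S.E (fun ω => φ (Fin.append (fun i => X i ω) (fun i => Y i ω))) =
      S.E (fun ω => (S.E (fun ω' => φ (Fin.append (fun i => X i ω) (fun i => Y i ω')))).toReal)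

/-- `Y` (an `n`-dimensional random vector) is negatively dependent to `X`
(an `m`-dimensional random vector) under the sub-linear expectation `E`:
`E[φ₁(X) φ₂(Y)] ≤ E[φ₁(X)] E[φ₂(Y)]` for every pair of test functions
`φ₁ ∈ C_{l,Lip}(ℝ^m)`, `φ₂ ∈ C_{l,Lip}(ℝ^n)` which are both coordinatewise nondecreasing
or both coordinatewise nonincreasing, with `φ₁(X) ≥ 0`, `E[φ₂(Y)] ≥ 0` and
`E[|φ₁(X) φ₂(Y)|], E[|φ₁(X)|], E[|φ₂(Y)|] < ∞`. -/
def NegDepTo (S : SLE Ω) {m n : ℕ} (X : Fin m → Ω → ℝ) (Y : Fin n → Ω → ℝ) : Prop :=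
  ∀ (φ₁ : (Fin m → ℝ) → ℝ) (φ₂ : (Fin n → ℝ) → ℝ), CLLip φ₁ → CLLip φ₂ →
    ((Monotone φ₁ ∧ Monotone φ₂) ∨ (Antitone φ₁ ∧ Antitone φ₂)) →
    (∀ ω, 0 ≤ φ₁ (fun i => X i ω)) →
    0 ≤ S.E (fun ω => φ₂ (fun i => Y i ω)) →
    S.E (fun ω => |φ₁ (fun i => X i ω) * φ₂ (fun i => Y i ω)|) ≠ ⊤ →
    S.E (fun ω => |φ₁ (fun i => X i ω)|) ≠ ⊤ →
    S.E (fun ω => |φ₂ (fun i => Y i ω)|) ≠ ⊤ →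
    S.E (fun ω => φ₁ (fun i => X i ω) * φ₂ (fun i => Y i ω)) ≤
      S.E (fun ω => φ₁ (fun i => X i ω)) * S.E (fun ω => φ₂ (fun i => Y i ω))

/-- The capacity generated by a sub-linear expectation:
`V(A) := inf{E[ξ] : I_A ≤ ξ, ξ ∈ ℋ}`. -/
noncomputable def V (S : SLE Ω) (A : Set Ω) : EReal :=
  sInf (S.E '' {ξ | ξ ∈ S.H ∧ ∀ ω, A.indicator (fun _ => (1:ℝ)) ω ≤ ξ ω})

/-- The outer capacity `V*(A) := inf{Σ_n V(A_n) : A ⊆ ⋃_n A_n}`. -/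
noncomputable def Vstar (S : SLE Ω) (A : Set Ω) : EReal :=
  sInf {x : EReal | ∃ B : ℕ → Set Ω, A ⊆ ⋃ i, B i ∧
    x = ((∑' i, erealToENNReal (S.V (B i)) : ℝ≥0∞) : EReal)}

/-- The Choquet integral
`C_V[X] := ∫_0^∞ V(X ≥ t) dt + ∫_{-∞}^0 (V(X ≥ t) − 1) dt`. -/
noncomputable def choquet (S : SLE Ω) (X : Ω → ℝ) : EReal :=
  ((∫⁻ t in Set.Ioi (0:ℝ), erealToENNReal (S.V {ω | t ≤ X ω}) : ℝ≥0∞) : EReal)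
    - ((∫⁻ t in Set.Iio (0:ℝ), erealToENNReal (1 - S.V {ω | t ≤ X ω}) : ℝ≥0∞) : EReal)

/-- A sequence `{X_n ; n ≥ 1}` is identically distributed:
`E[φ(X_i)] = E[φ(X_1)]` for all `i ≥ 1` and `φ ∈ C_{l,Lip}(ℝ)`. -/
def IdentDistrib (S : SLE Ω) (X : ℕ → Ω → ℝ) : Prop :=
  ∀ i : ℕ, 1 ≤ i → ∀ φ : (Fin 1 → ℝ) → ℝ, CLLip φ →
    S.E (fun ω => φ (fun _ => X i ω)) = S.E (fun ω => φ (fun _ => X 1 ω))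

/-- A sequence `{X_n ; n ≥ 1}` is negatively dependent:
`X_{i+1}` is negatively dependent to `(X_1, …, X_i)` for every `i ≥ 1`. -/
def NegDepSeq (S : SLE Ω) (X : ℕ → Ω → ℝ) : Prop :=
  ∀ i : ℕ, 1 ≤ i →
    S.NegDepTo (fun j : Fin i => X ((j : ℕ) + 1)) (fun _ : Fin 1 => X (i + 1))

/-- A sequence `{X_n ; n ≥ 1}` is independent:
`X_{i+1}` is independent to `(X_1, …, X_i)` for every `i ≥ 1`. -/
def IndepSeq (S : SLE Ω) (X : ℕ → Ω → ℝ) : Prop :=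
  ∀ i : ℕ, 1 ≤ i →
    S.IndepTo (fun j : Fin i => X ((j : ℕ) + 1)) (fun _ : Fin 1 => X (i + 1))

end SLE

open MeasureTheory in
/-- The upper expectation generated by a family `𝒫` of probability measures:
`E[ξ] := sup_{Q ∈ 𝒫} E_Q[ξ]`. -/
noncomputable def upperExp {Ω : Type*} [MeasurableSpace Ω]
    (P : Set (Measure Ω)) (f : Ω → ℝ) : EReal :=
  ⨆ Q ∈ P, ((∫ ω, f ω ∂Q : ℝ) : EReal)

open MeasureTheory in

lemma CLLip.continuous {k : ℕ} {φ : (Fin k → ℝ) → ℝ} (h : CLLip φ) : Continuous φ := by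
  obtain ⟨C, hC, m, hb⟩ := h
  rw [continuous_iff_continuousAt]
  intro y
  have hg : Tendsto (fun x : Fin k → ℝ => C * (1 + ‖x‖ ^ m + ‖y‖ ^ m) * ‖x - y‖)
      (nhds y) (nhds 0) := by
    have hcont : Continuous fun x : Fin k → ℝ => C * (1 + ‖x‖ ^ m + ‖y‖ ^ m) * ‖x - y‖ := by
      fun_prop
    have := hcont.tendsto y
    simpa using this
  have h0 : Tendsto (fun x => φ x - φ y) (nhds y) (nhds 0) :=
    squeeze_zero_norm (fun x => by simpa using hb x y) hg
  exact tendsto_sub_nhds_zero_iff.mp h0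

open MeasureTheory in
lemma upperExp_abs_bound {Ω : Type*} [MeasurableSpace Ω] (P : Set (Measure Ω)) (f : Ω → ℝ) :
    upperExp P f ≤ upperExp P (fun ω => |f ω|) := by
  refine iSup₂_le fun Q hQ => ?_
  refine le_trans ?_ (le_iSup₂ (f := fun Q _ => ((∫ ω, |f ω| ∂Q : ℝ) : EReal)) Q hQ)
  have : (∫ ω, f ω ∂Q) ≤ ∫ ω, |f ω| ∂Q := by
    calc (∫ ω, f ω ∂Q) ≤ |∫ ω, f ω ∂Q| := le_abs_self _
    _ ≤ ∫ ω, |f ω| ∂Q := by simpa [Real.norm_eq_abs] using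
        norm_integral_le_integral_norm (f := f) (μ := Q)
  exact_mod_cast this


open MeasureTheory in
/-- **Negative dependence for upper expectations over a family of probability measures.**
If the random vectors `X` and `Y` are independent under each `Q ∈ 𝒫`, then `Y` is
negatively dependent to `X` under the upper expectation `E[ξ] = sup_{Q ∈ 𝒫} E_Q[ξ]`. -/
theorem negDep_of_indep_upperExp {Ω : Type*} [MeasurableSpace Ω]
    (P : Set (Measure Ω)) (hP : ∀ Q ∈ P, IsProbabilityMeasure Q)
    {m n : ℕ} (X : Ω → (Fin m → ℝ)) (Y : Ω → (Fin n → ℝ))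
    (hX : Measurable X) (hY : Measurable Y)
    (hindep : ∀ Q ∈ P, ProbabilityTheory.IndepFun X Y Q)
    (φ₁ : (Fin m → ℝ) → ℝ) (φ₂ : (Fin n → ℝ) → ℝ)
    (hφ₁ : CLLip φ₁) (hφ₂ : CLLip φ₂)
    (hmono : (Monotone φ₁ ∧ Monotone φ₂) ∨ (Antitone φ₁ ∧ Antitone φ₂))
    (hpos : ∀ ω, 0 ≤ φ₁ (X ω))
    (hE2 : 0 ≤ upperExp P (fun ω => φ₂ (Y ω)))
    (hfin12 : upperExp P (fun ω => |φ₁ (X ω) * φ₂ (Y ω)|) < ⊤)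
    (hfin1 : upperExp P (fun ω => |φ₁ (X ω)|) < ⊤)
    (hfin2 : upperExp P (fun ω => |φ₂ (Y ω)|) < ⊤) :
    upperExp P (fun ω => φ₁ (X ω) * φ₂ (Y ω))
      ≤ upperExp P (fun ω => φ₁ (X ω)) * upperExp P (fun ω => φ₂ (Y ω)) := by
  by_cases hPne : ∃ Q, Q ∈ P
  · obtain ⟨Q0, hQ0⟩ := hPne
    -- the two sups are finite and nonnegative
    have hE1top : upperExp P (fun ω => φ₁ (X ω)) ≠ ⊤ :=
      ((upperExp_abs_bound P _).trans_lt hfin1).ne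
    have hE2top : upperExp P (fun ω => φ₂ (Y ω)) ≠ ⊤ :=
      ((upperExp_abs_bound P _).trans_lt hfin2).ne
    have hE1bot : upperExp P (fun ω => φ₁ (X ω)) ≠ ⊥ := by
      have : ((∫ ω, φ₁ (X ω) ∂Q0 : ℝ) : EReal) ≤ upperExp P (fun ω => φ₁ (X ω)) :=
        le_iSup₂ (f := fun Q _ => ((∫ ω, φ₁ (X ω) ∂Q : ℝ) : EReal)) Q0 hQ0
      exact fun hb => by simp [hb] at this
    have hE2bot : upperExp P (fun ω => φ₂ (Y ω)) ≠ ⊥ := by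
      intro hb; rw [hb] at hE2; exact (EReal.bot_lt_zero).not_ge hE2
    obtain ⟨e1, he1⟩ : ∃ r : ℝ, upperExp P (fun ω => φ₁ (X ω)) = (r : EReal) :=
      ⟨_, (EReal.coe_toReal hE1top hE1bot).symm⟩
    obtain ⟨e2, he2⟩ : ∃ r : ℝ, upperExp P (fun ω => φ₂ (Y ω)) = (r : EReal) :=
      ⟨_, (EReal.coe_toReal hE2top hE2bot).symm⟩
    have he2nn : (0:ℝ) ≤ e2 := by
      rw [he2] at hE2; exact_mod_cast hE2
    refine iSup₂_le fun Q hQ => ?_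
    have hφ₁m : Measurable (φ₁ ∘ X) := (hφ₁.continuous.measurable).comp hX
    have hφ₂m : Measurable (φ₂ ∘ Y) := (hφ₂.continuous.measurable).comp hY
    have hind : ProbabilityTheory.IndepFun (φ₁ ∘ X) (φ₂ ∘ Y) Q :=
      (hindep Q hQ).comp hφ₁.continuous.measurable hφ₂.continuous.measurable
    have hmul : (∫ ω, φ₁ (X ω) * φ₂ (Y ω) ∂Q)
        = (∫ ω, φ₁ (X ω) ∂Q) * ∫ ω, φ₂ (Y ω) ∂Q := by
      have := ProbabilityTheory.IndepFun.integral_mul_eq_mul_integral hind hφ₁m.aestronglyMeasurable hφ₂m.aestronglyMeasurable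
      simpa [Function.comp, Pi.mul_apply] using this
    have hb1 : (0:ℝ) ≤ ∫ ω, φ₁ (X ω) ∂Q := integral_nonneg hpos
    have hb1' : (∫ ω, φ₁ (X ω) ∂Q) ≤ e1 := by
      have : ((∫ ω, φ₁ (X ω) ∂Q : ℝ) : EReal) ≤ upperExp P (fun ω => φ₁ (X ω)) :=
        le_iSup₂ (f := fun Q _ => ((∫ ω, φ₁ (X ω) ∂Q : ℝ) : EReal)) Q hQ
      rw [he1] at this; exact_mod_cast this
    have hb2' : (∫ ω, φ₂ (Y ω) ∂Q) ≤ e2 := by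
      have : ((∫ ω, φ₂ (Y ω) ∂Q : ℝ) : EReal) ≤ upperExp P (fun ω => φ₂ (Y ω)) :=
        le_iSup₂ (f := fun Q _ => ((∫ ω, φ₂ (Y ω) ∂Q : ℝ) : EReal)) Q hQ
      rw [he2] at this; exact_mod_cast this
    rw [he1, he2, ← EReal.coe_mul]
    have : (∫ ω, φ₁ (X ω) * φ₂ (Y ω) ∂Q) ≤ e1 * e2 := by
      rw [hmul]
      calc (∫ ω, φ₁ (X ω) ∂Q) * ∫ ω, φ₂ (Y ω) ∂Q
          ≤ (∫ ω, φ₁ (X ω) ∂Q) * e2 := mul_le_mul_of_nonneg_left hb2' hb1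
        _ ≤ e1 * e2 := mul_le_mul_of_nonneg_right hb1' he2nn
    exact_mod_cast this
  · have hP0 : P = ∅ := Set.eq_empty_iff_forall_notMem.mpr (fun Q hQ => hPne ⟨Q, hQ⟩)
    simp [upperExp, hP0]
end

section
/- Strong law of large numbers, converse part (Theorem 3(b)): Let {X_n; n ≥ 1} be a sequence of independent and identically distributed random variables in a sub-linear expectation space (Ω, ℋ, E), and let V be the capacity generated by E. Suppose V is continuous. If V( limsup_{n→∞} |S_n|/n = +∞ ) < 1, then C_V[|X_1|] < ∞. -/
open scoped BigOperators ENNReal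
open Filter

section Helpers

variable {Ω : Type*} (S : SLE Ω)

lemma clip_of_lip {n : ℕ} {φ : (Fin n → ℝ) → ℝ} (L : ℝ)
    (h : ∀ x y, |φ x - φ y| ≤ L * ‖x - y‖) : CLLip φ := by
  refine ⟨|L| + 1, by positivity, 0, fun x y => ?_⟩
  have h1 := h x y
  have h2 : (0:ℝ) ≤ ‖x - y‖ := norm_nonneg _
  have h3 : L ≤ |L| := le_abs_self L
  simp only [pow_zero]
  nlinarith [abs_nonneg L]

lemma SLE.mem_comp1 {Z : Ω → ℝ} (hZ : Z ∈ S.H) {ψ : ℝ → ℝ} (L : ℝ)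
    (hψ : ∀ a b : ℝ, |ψ a - ψ b| ≤ L * |a - b|) : (fun ω => ψ (Z ω)) ∈ S.H := by
  have := S.comp_mem (n := 1) (fun _ => Z) (fun v => ψ (v 0)) (fun _ => hZ) ?_
  · exact this
  · refine ⟨|L| + 1, by positivity, 0, fun x y => ?_⟩
    have h1 := hψ (x 0) (y 0)
    have h2 : |x 0 - y 0| ≤ ‖x - y‖ := by
      have := norm_le_pi_norm (x - y) 0
      simpa using this
    have h3 : L ≤ |L| := le_abs_self L
    simp only [pow_zero]
    nlinarith [abs_nonneg (x 0 - y 0), abs_nonneg L, norm_nonneg (x - y),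
      abs_nonneg (ψ (x 0) - ψ (y 0))]

lemma SLE.E_le_of_le {Z : Ω → ℝ} (hZ : Z ∈ S.H) {b : ℝ} (h : ∀ ω, Z ω ≤ b) :
    S.E Z ≤ (b : EReal) := by
  have := S.mono hZ (S.const_mem b) h
  rwa [S.const_eq b] at this

lemma SLE.le_E_of_le {Z : Ω → ℝ} (hZ : Z ∈ S.H) {a : ℝ} (h : ∀ ω, a ≤ Z ω) :
    (a : EReal) ≤ S.E Z := by
  have := S.mono (S.const_mem a) hZ h
  rwa [S.const_eq a] at this

lemma SLE.E_ne_top {Z : Ω → ℝ} (hZ : Z ∈ S.H) {b : ℝ} (h : ∀ ω, Z ω ≤ b) : S.E Z ≠ ⊤ :=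
  ((S.E_le_of_le hZ h).trans_lt (EReal.coe_lt_top b)).ne

lemma SLE.E_ne_bot {Z : Ω → ℝ} (hZ : Z ∈ S.H) {a : ℝ} (h : ∀ ω, a ≤ Z ω) : S.E Z ≠ ⊥ :=
  ((EReal.bot_lt_coe a).trans_le (S.le_E_of_le hZ h)).ne'

lemma SLE.E_coe {Z : Ω → ℝ} (hZ : Z ∈ S.H) {a b : ℝ} (h1 : ∀ ω, a ≤ Z ω)
    (h2 : ∀ ω, Z ω ≤ b) :
    S.E Z = (((S.E Z).toReal : ℝ) : EReal) ∧ a ≤ (S.E Z).toReal ∧ (S.E Z).toReal ≤ b := by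
  have hnt := S.E_ne_top hZ h2
  have hnb := S.E_ne_bot hZ h1
  have hc : (((S.E Z).toReal : ℝ) : EReal) = S.E Z := EReal.coe_toReal hnt hnb
  refine ⟨hc.symm, ?_, ?_⟩
  · have := S.le_E_of_le hZ h1
    rw [← hc] at this
    exact_mod_cast this
  · have := S.E_le_of_le hZ h2
    rw [← hc] at this
    exact_mod_cast this

/-- `E[a + b Z] = a + b E[Z]` for bounded `Z ∈ H` and `b ≥ 0`. -/
lemma SLE.E_affine {Z : Ω → ℝ} (hZ : Z ∈ S.H) (h0 : ∀ ω, 0 ≤ Z ω) (h1 : ∀ ω, Z ω ≤ 1)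
    (a b : ℝ) (hb : 0 ≤ b) :
    S.E (fun ω => a + b * Z ω) = ((a + b * (S.E Z).toReal : ℝ) : EReal) := by
  obtain ⟨hc, ht0, ht1⟩ := S.E_coe hZ h0 h1
  set t := (S.E Z).toReal with htdef
  -- membership of b*Z and a + b*Z
  have hbZ : (fun ω => b * Z ω) ∈ S.H :=
    S.mem_comp1 hZ |b| (fun u v => by rw [← mul_sub, abs_mul])
  have habZ : (fun ω => a + b * Z ω) ∈ S.H := by
    refine S.mem_comp1 hZ |b| (fun u v => ?_) (ψ := fun x => a + b * x)
    have : a + b * u - (a + b * v) = b * (u - v) := by ring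
    rw [this, abs_mul]
  have hEbZ : S.E (fun ω => b * Z ω) = ((b * t : ℝ) : EReal) := by
    rw [S.homog hZ b hb, hc, ← EReal.coe_mul]
  -- bounds for b*Z and a + b*Z
  have hbZ0 : ∀ ω, 0 ≤ b * Z ω := fun ω => mul_nonneg hb (h0 ω)
  have hbZ1 : ∀ ω, b * Z ω ≤ b := fun ω => by nlinarith [h0 ω, h1 ω]
  have habZlb : ∀ ω, a ≤ a + b * Z ω := fun ω => by nlinarith [hbZ0 ω]
  have habZub : ∀ ω, a + b * Z ω ≤ a + b := fun ω => by nlinarith [hbZ1 ω]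
  -- upper: E[a + bZ] ≤ a + E[bZ]
  have hup : S.E (fun ω => a + b * Z ω) ≤ ((a + b * t : ℝ) : EReal) := by
    have hsub := S.subadd (S.const_mem a) hbZ
      (by rw [S.const_eq]; exact fun ⟨h, _⟩ => by exact absurd h (by simp))
      (by rw [S.const_eq]; exact fun ⟨h, _⟩ => by exact absurd h (by simp))
    rw [S.const_eq, hEbZ] at hsub
    calc S.E (fun ω => a + b * Z ω) ≤ (a : EReal) + ((b * t : ℝ) : EReal) := hsub
      _ = ((a + b * t : ℝ) : EReal) := by rw [← EReal.coe_add]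
  -- lower
  have hlow : ((a + b * t : ℝ) : EReal) ≤ S.E (fun ω => a + b * Z ω) := by
    have hsub := S.subadd habZ (S.const_mem (-a))
      (fun ⟨_, h⟩ => by rw [S.const_eq] at h; exact absurd h (by simp))
      (fun ⟨h, _⟩ => absurd h (S.E_ne_bot habZ habZlb))
    have heq : (fun ω => (a + b * Z ω) + (-a)) = (fun ω => b * Z ω) := by
      funext ω; ring
    rw [heq, S.const_eq, hEbZ] at hsub
    -- hsub : ↑(b*t) ≤ E[a+bZ] + ↑(-a)
    have := add_le_add_left hsub (a : EReal)
    have hassoc : S.E (fun ω => a + b * Z ω) + ((-a : ℝ) : EReal) + (a : EReal)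
        = S.E (fun ω => a + b * Z ω) := by
      rw [add_assoc, ← EReal.coe_add]
      norm_num
    rw [hassoc] at this
    calc ((a + b * t : ℝ) : EReal) = ((b * t : ℝ) : EReal) + (a : EReal) := by
          rw [← EReal.coe_add]; norm_cast; ring
      _ ≤ _ := this
  exact le_antisymm hup hlow

end Helpers
section VLemmas

variable {Ω : Type*} (S : SLE Ω)

lemma indicator_nonneg' (A : Set Ω) (ω : Ω) : 0 ≤ A.indicator (fun _ => (1:ℝ)) ω :=
  Set.indicator_nonneg (fun _ _ => zero_le_one) ω

lemma indicator_le_one' (A : Set Ω) (ω : Ω) : A.indicator (fun _ => (1:ℝ)) ω ≤ 1 := by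
  classical
  rw [Set.indicator_apply]
  split <;> norm_num

lemma SLE.V_le_E {A : Set Ω} {ξ : Ω → ℝ} (hξ : ξ ∈ S.H)
    (h : ∀ ω, A.indicator (fun _ => (1:ℝ)) ω ≤ ξ ω) : S.V A ≤ S.E ξ :=
  sInf_le ⟨ξ, ⟨hξ, h⟩, rfl⟩

lemma SLE.E_le_V {A : Set Ω} {η : Ω → ℝ} (hη : η ∈ S.H)
    (h : ∀ ω, η ω ≤ A.indicator (fun _ => (1:ℝ)) ω) : S.E η ≤ S.V A := by
  refine le_sInf ?_
  rintro x ⟨ξ, ⟨hξH, hξ⟩, rfl⟩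
  exact S.mono hη hξH (fun ω => (h ω).trans (hξ ω))

lemma SLE.V_nonneg (A : Set Ω) : (0 : EReal) ≤ S.V A := by
  have : S.E (fun _ => (0:ℝ)) ≤ S.V A :=
    S.E_le_V (S.const_mem 0) (fun ω => indicator_nonneg' A ω)
  rwa [S.const_eq 0] at this

lemma SLE.V_le_one (A : Set Ω) : S.V A ≤ 1 := by
  have : S.V A ≤ S.E (fun _ => (1:ℝ)) :=
    S.V_le_E (S.const_mem 1) (fun ω => indicator_le_one' A ω)
  rwa [S.const_eq 1] at this

lemma SLE.V_mono {A B : Set Ω} (h : A ⊆ B) : S.V A ≤ S.V B := by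
  refine le_sInf ?_
  rintro x ⟨ξ, ⟨hξH, hξ⟩, rfl⟩
  refine S.V_le_E hξH (fun ω => ?_)
  classical
  rw [Set.indicator_apply]
  split
  · next hω =>
    have := hξ ω
    rwa [Set.indicator_of_mem (h hω)] at this
  · exact le_trans (indicator_nonneg' B ω) (hξ ω)

lemma SLE.V_ne_top (A : Set Ω) : S.V A ≠ ⊤ :=
  ((S.V_le_one A).trans_lt (by exact_mod_cast EReal.coe_lt_top 1)).ne

lemma SLE.V_ne_bot (A : Set Ω) : S.V A ≠ ⊥ :=
  ((bot_lt_iff_ne_bot.mpr (by simp)).trans_le (S.V_nonneg A)).ne'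

lemma SLE.V_coe (A : Set Ω) : S.V A = (((S.V A).toReal : ℝ) : EReal) :=
  (EReal.coe_toReal (S.V_ne_top A) (S.V_ne_bot A)).symm

lemma SLE.V_toReal_nonneg (A : Set Ω) : 0 ≤ (S.V A).toReal := by
  have := EReal.toReal_le_toReal (S.V_nonneg A) (by simp) (S.V_ne_top A)
  simpa using this

lemma SLE.V_toReal_le_one (A : Set Ω) : (S.V A).toReal ≤ 1 := by
  have := S.V_le_one A
  rw [S.V_coe A] at this
  exact_mod_cast this

end VLemmas
section RealLemmas

lemma cl01_lip (u v : ℝ) : |min 1 (max 0 u) - min 1 (max 0 v)| ≤ |u - v| := by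
  have h1 : |min 1 (max 0 u) - min 1 (max 0 v)| ≤ max |1 - 1| |max 0 u - max 0 v| :=
    abs_min_sub_min_le_max 1 (max 0 u) 1 (max 0 v)
  have h2 : |max 0 u - max 0 v| ≤ |u - v| := by
    rw [max_comm 0 u, max_comm 0 v]
    exact abs_max_sub_max_le_abs u v 0
  refine h1.trans (max_le ?_ h2)
  simp [abs_nonneg]

lemma abs_prod_sub_prod {ι : Type*} (s : Finset ι) (f g : ι → ℝ)
    (hf0 : ∀ i ∈ s, 0 ≤ f i) (hf1 : ∀ i ∈ s, f i ≤ 1)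
    (hg0 : ∀ i ∈ s, 0 ≤ g i) (hg1 : ∀ i ∈ s, g i ≤ 1) :
    |∏ i ∈ s, f i - ∏ i ∈ s, g i| ≤ ∑ i ∈ s, |f i - g i| := by
  classical
  induction s using Finset.induction_on with
  | empty => simp
  | insert a t hnotmem ih =>
    rw [Finset.prod_insert hnotmem, Finset.prod_insert hnotmem, Finset.sum_insert hnotmem]
    have ha0 := hf0 a (Finset.mem_insert_self a t)
    have ha1 := hf1 a (Finset.mem_insert_self a t)
    have hb0 := hg0 a (Finset.mem_insert_self a t)
    have hb1 := hg1 a (Finset.mem_insert_self a t)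
    have hP0 : 0 ≤ ∏ i ∈ t, f i :=
      Finset.prod_nonneg (fun i hi => hf0 i (Finset.mem_insert_of_mem hi))
    have hQ0 : 0 ≤ ∏ i ∈ t, g i :=
      Finset.prod_nonneg (fun i hi => hg0 i (Finset.mem_insert_of_mem hi))
    have hQ1 : ∏ i ∈ t, g i ≤ 1 :=
      Finset.prod_le_one (fun i hi => hg0 i (Finset.mem_insert_of_mem hi))
        (fun i hi => hg1 i (Finset.mem_insert_of_mem hi))
    have ih' := ih (fun i hi => hf0 i (Finset.mem_insert_of_mem hi))
      (fun i hi => hf1 i (Finset.mem_insert_of_mem hi))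
      (fun i hi => hg0 i (Finset.mem_insert_of_mem hi))
      (fun i hi => hg1 i (Finset.mem_insert_of_mem hi))
    have key : |f a * ∏ i ∈ t, f i - g a * ∏ i ∈ t, g i| ≤
        |f a| * |∏ i ∈ t, f i - ∏ i ∈ t, g i| + |f a - g a| * |∏ i ∈ t, g i| := by
      have : f a * ∏ i ∈ t, f i - g a * ∏ i ∈ t, g i
          = f a * (∏ i ∈ t, f i - ∏ i ∈ t, g i) + (f a - g a) * ∏ i ∈ t, g i := by ring
      rw [this]
      exact (abs_add_le _ _).trans (by rw [abs_mul, abs_mul])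
    have hfa : |f a| ≤ 1 := abs_le.mpr ⟨by linarith, ha1⟩
    have hQa : |∏ i ∈ t, g i| ≤ 1 := abs_le.mpr ⟨by linarith, hQ1⟩
    calc |f a * ∏ i ∈ t, f i - g a * ∏ i ∈ t, g i|
        ≤ |f a| * |∏ i ∈ t, f i - ∏ i ∈ t, g i| + |f a - g a| * |∏ i ∈ t, g i| := key
      _ ≤ 1 * |∏ i ∈ t, f i - ∏ i ∈ t, g i| + |f a - g a| * 1 := by
          have hA := abs_nonneg (∏ i ∈ t, f i - ∏ i ∈ t, g i)
          have hB := abs_nonneg (f a - g a)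
          nlinarith [hfa, hQa]
      _ = |∏ i ∈ t, f i - ∏ i ∈ t, g i| + |f a - g a| := by ring
      _ ≤ ∑ i ∈ t, |f i - g i| + |f a - g a| := by linarith [ih']
      _ = |f a - g a| + ∑ i ∈ t, |f i - g i| := by ring

lemma prod_one_sub_le_exp {ι : Type*} (s : Finset ι) (e : ι → ℝ)
    (h0 : ∀ i ∈ s, 0 ≤ e i) (h1' : ∀ i ∈ s, e i ≤ 1) :
    ∏ i ∈ s, (1 - e i) ≤ Real.exp (-∑ i ∈ s, e i) := by
  have h1 : ∀ i ∈ s, 1 - e i ≤ Real.exp (-e i) := fun i _ => by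
    have := Real.add_one_le_exp (-(e i)); linarith
  calc ∏ i ∈ s, (1 - e i) ≤ ∏ i ∈ s, Real.exp (-e i) := by
        refine Finset.prod_le_prod (fun i hi => by linarith [h1' i hi]) h1
      _ = Real.exp (∑ i ∈ s, -(e i)) := (Real.exp_sum s _).symm
      _ = Real.exp (-∑ i ∈ s, e i) := by rw [Finset.sum_neg_distrib]

lemma one_le_of_forall_sub {t : ℝ} (h : ∀ δ : ℝ, 0 < δ → 1 - δ ≤ t) : 1 ≤ t := by
  by_contra hlt
  push_neg at hlt
  have := h ((1 - t)/2) (by linarith)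
  linarith

end RealLemmas
section GQ

/-- Lipschitz cutoff: `0` for `|x| ≤ ck`, `1` for `|x| ≥ 2ck` (and `0` for `k ≤ N`). -/
noncomputable def gfun (c : ℝ) (N : ℕ) (k : ℕ) (x : ℝ) : ℝ :=
  if k ≤ N then 0 else min 1 (max 0 ((|x| - c*(k:ℝ))/(c*(k:ℝ))))

noncomputable def Qfun (c : ℝ) (N : ℕ) (m : ℕ) (x : Fin m → ℝ) : ℝ :=
  ∏ j : Fin m, (1 - gfun c N ((j:ℕ)+1) (x j))

lemma g_nonneg (c : ℝ) (N k : ℕ) (x : ℝ) : 0 ≤ gfun c N k x := by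
  unfold gfun
  split
  · exact le_refl 0
  · exact le_min zero_le_one (le_max_left 0 _)

lemma g_le_one (c : ℝ) (N k : ℕ) (x : ℝ) : gfun c N k x ≤ 1 := by
  unfold gfun
  split
  · exact zero_le_one
  · exact min_le_left 1 _

lemma g_lip {c : ℝ} (hc : 0 < c) (N : ℕ) (k : ℕ) (hk : 1 ≤ k) (x y : ℝ) :
    |gfun c N k x - gfun c N k y| ≤ (1/c) * |x - y| := by
  have hk1 : (1:ℝ) ≤ (k:ℝ) := by exact_mod_cast hk
  have hck : 0 < c * (k:ℝ) := by nlinarith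
  unfold gfun
  split
  · simp only [sub_self, abs_zero]
    positivity
  · have h1 := cl01_lip ((|x| - c*(k:ℝ))/(c*(k:ℝ))) ((|y| - c*(k:ℝ))/(c*(k:ℝ)))
    have h2 : (|x| - c*(k:ℝ))/(c*(k:ℝ)) - (|y| - c*(k:ℝ))/(c*(k:ℝ)) = (|x| - |y|)/(c*(k:ℝ)) := by
      field_simp
      ring
    rw [h2] at h1
    refine h1.trans ?_
    rw [abs_div, abs_of_pos hck]
    have h4 : |(|x| - |y|)| ≤ |x - y| := abs_abs_sub_abs_le_abs_sub x y
    have h5 : |(|x| - |y|)| / (c*(k:ℝ)) ≤ |x - y| / c := by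
      apply div_le_div₀ (abs_nonneg _) h4 hc
      nlinarith
    calc |(|x| - |y|)| / (c*(k:ℝ)) ≤ |x - y| / c := h5
      _ = (1/c) * |x - y| := by ring

lemma g_supp {c : ℝ} (hc : 0 < c) (N : ℕ) (k : ℕ) (x : ℝ) (h : gfun c N k x ≠ 0) :
    N < k ∧ c*(k:ℝ) < |x| := by
  unfold gfun at h
  split at h
  · exact absurd rfl h
  · next hN =>
    refine ⟨Nat.lt_of_not_le hN, ?_⟩
    by_contra hle
    push_neg at hle
    have hk : 1 ≤ k := Nat.one_le_iff_ne_zero.mpr (by rintro rfl; exact hN (Nat.zero_le N))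
    have hk1 : (1:ℝ) ≤ (k:ℝ) := by exact_mod_cast hk
    have hck : 0 < c * (k:ℝ) := by nlinarith
    have h0 : (|x| - c*(k:ℝ))/(c*(k:ℝ)) ≤ 0 := div_nonpos_of_nonpos_of_nonneg (by linarith) hck.le
    have hmax : max 0 ((|x| - c*(k:ℝ))/(c*(k:ℝ))) = 0 := max_eq_left h0
    rw [hmax] at h
    simp at h

lemma g_one {c : ℝ} (hc : 0 < c) (N : ℕ) (k : ℕ) (hN : N < k) (x : ℝ)
    (h : 2*c*(k:ℝ) ≤ |x|) : gfun c N k x = 1 := by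
  have hk : 1 ≤ k := Nat.one_le_iff_ne_zero.mpr (by rintro rfl; exact Nat.not_lt_zero N hN)
  have hk1 : (1:ℝ) ≤ (k:ℝ) := by exact_mod_cast hk
  have hck : 0 < c * (k:ℝ) := by nlinarith
  unfold gfun
  rw [if_neg (Nat.not_le.mpr hN)]
  have h1 : (1:ℝ) ≤ (|x| - c*(k:ℝ))/(c*(k:ℝ)) := by
    rw [le_div_iff₀ hck]
    nlinarith
  have h2 : max 0 ((|x| - c*(k:ℝ))/(c*(k:ℝ))) = (|x| - c*(k:ℝ))/(c*(k:ℝ)) :=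
    max_eq_right (by linarith)
  rw [h2]
  exact min_eq_left h1

lemma Q_nonneg (c : ℝ) (N m : ℕ) (x : Fin m → ℝ) : 0 ≤ Qfun c N m x :=
  Finset.prod_nonneg (fun j _ => by linarith [g_le_one c N ((j:ℕ)+1) (x j)])

lemma Q_le_one (c : ℝ) (N m : ℕ) (x : Fin m → ℝ) : Qfun c N m x ≤ 1 :=
  Finset.prod_le_one (fun j _ => by linarith [g_le_one c N ((j:ℕ)+1) (x j)])
    (fun j _ => by linarith [g_nonneg c N ((j:ℕ)+1) (x j)])

lemma Q_lip {c : ℝ} (hc : 0 < c) (N m : ℕ) (x y : Fin m → ℝ) :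
    |Qfun c N m x - Qfun c N m y| ≤ ((m : ℝ)/c) * ‖x - y‖ := by
  have h1 : |Qfun c N m x - Qfun c N m y| ≤
      ∑ j : Fin m, |(1 - gfun c N ((j:ℕ)+1) (x j)) - (1 - gfun c N ((j:ℕ)+1) (y j))| := by
    apply abs_prod_sub_prod
    · exact fun j _ => by linarith [g_le_one c N ((j:ℕ)+1) (x j)]
    · exact fun j _ => by linarith [g_nonneg c N ((j:ℕ)+1) (x j)]
    · exact fun j _ => by linarith [g_le_one c N ((j:ℕ)+1) (y j)]
    · exact fun j _ => by linarith [g_nonneg c N ((j:ℕ)+1) (y j)]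
  have h2 : ∀ j : Fin m, |(1 - gfun c N ((j:ℕ)+1) (x j)) - (1 - gfun c N ((j:ℕ)+1) (y j))|
      ≤ (1/c) * ‖x - y‖ := by
    intro j
    have heq : (1 - gfun c N ((j:ℕ)+1) (x j)) - (1 - gfun c N ((j:ℕ)+1) (y j))
        = -(gfun c N ((j:ℕ)+1) (x j) - gfun c N ((j:ℕ)+1) (y j)) := by ring
    rw [heq, abs_neg]
    refine (g_lip hc N ((j:ℕ)+1) (Nat.le_add_left 1 _) (x j) (y j)).trans ?_
    have hxy : |x j - y j| ≤ ‖x - y‖ := by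
      have := norm_le_pi_norm (x - y) j
      simpa using this
    have hc' : (0:ℝ) ≤ 1/c := by positivity
    nlinarith
  calc |Qfun c N m x - Qfun c N m y|
      ≤ ∑ j : Fin m, |(1 - gfun c N ((j:ℕ)+1) (x j)) - (1 - gfun c N ((j:ℕ)+1) (y j))| := h1
    _ ≤ ∑ _j : Fin m, (1/c) * ‖x - y‖ := Finset.sum_le_sum (fun j _ => h2 j)
    _ = (m : ℝ) * ((1/c) * ‖x - y‖) := by
        rw [Finset.sum_const, Finset.card_univ, Fintype.card_fin, nsmul_eq_mul]
    _ = ((m : ℝ)/c) * ‖x - y‖ := by ring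

lemma Q_split (c : ℝ) (N m : ℕ) (x : Fin m → ℝ) (y : Fin 1 → ℝ) :
    Qfun c N (m+1) (Fin.append x y) = Qfun c N m x * (1 - gfun c N (m+1) (y 0)) := by
  unfold Qfun
  rw [Fin.prod_univ_castSucc]
  congr 1
  · apply Finset.prod_congr rfl
    intro j _
    have h1 : Fin.append x y (Fin.castSucc j) = x j := Fin.append_left x y j
    have h2 : ((Fin.castSucc j : Fin (m+1)) : ℕ) = (j : ℕ) := rfl
    rw [h1, h2]
  · have h3 : Fin.last m = Fin.natAdd m (0 : Fin 1) := by
      apply Fin.ext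
      simp
    rw [h3, Fin.append_right x y 0]
    norm_num

end GQ
section Key

variable {Ω : Type*}

/-- Core Borel–Cantelli-type lemma: if the tail capacities of `{|X₁| ≥ 2c k}` diverge,
then the capacity of `{∃ k > N, |X_{k}| > c k}` is one. -/
lemma key_capacity (S : SLE Ω) (X : ℕ → Ω → ℝ)
    (hH : ∀ i, 1 ≤ i → X i ∈ S.H)
    (hid : S.IdentDistrib X)
    (hind : S.IndepSeq X)
    {c : ℝ} (hc : 0 < c) (N : ℕ)
    (hdiv : ∀ R : ℝ, ∃ m : ℕ, R ≤ ∑ k ∈ Finset.range m,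
      (if k + 1 ≤ N then 0 else (S.V {ω | 2*c*((k:ℝ)+1) ≤ |X 1 ω|}).toReal)) :
    S.V (⋃ k : ℕ, {ω | N < k + 1 ∧ c*((k:ℝ)+1) < |X (k+1) ω|}) = 1 := by
  classical
  -- membership facts
  have hXmem : ∀ (m : ℕ) (j : Fin m), X ((j:ℕ)+1) ∈ S.H :=
    fun m j => hH _ (Nat.le_add_left 1 _)
  have hQXmem : ∀ m : ℕ,
      (fun ω => 1 - Qfun c N m (fun j : Fin m => X ((j:ℕ)+1) ω)) ∈ S.H := by
    intro m
    refine S.comp_mem (fun j : Fin m => X ((j:ℕ)+1)) (fun x => 1 - Qfun c N m x)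
      (hXmem m) (clip_of_lip ((m:ℝ)/c) (fun x y => ?_))
    have heq : (1 - Qfun c N m x) - (1 - Qfun c N m y) = -(Qfun c N m x - Qfun c N m y) := by
      ring
    rw [heq, abs_neg]
    exact Q_lip hc N m x y
  have hQX0 : ∀ (m : ℕ) (ω : Ω), 0 ≤ 1 - Qfun c N m (fun j : Fin m => X ((j:ℕ)+1) ω) :=
    fun m ω => by linarith [Q_le_one c N m (fun j : Fin m => X ((j:ℕ)+1) ω)]
  have hQX1 : ∀ (m : ℕ) (ω : Ω), 1 - Qfun c N m (fun j : Fin m => X ((j:ℕ)+1) ω) ≤ 1 :=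
    fun m ω => by linarith [Q_nonneg c N m (fun j : Fin m => X ((j:ℕ)+1) ω)]
  -- the scalars u m and eps k
  set u : ℕ → ℝ := fun m =>
    (S.E (fun ω => 1 - Qfun c N m (fun j : Fin m => X ((j:ℕ)+1) ω))).toReal with hu
  have hucoe : ∀ m, S.E (fun ω => 1 - Qfun c N m (fun j : Fin m => X ((j:ℕ)+1) ω))
      = ((u m : ℝ) : EReal) :=
    fun m => (S.E_coe (hQXmem m) (hQX0 m) (hQX1 m)).1
  have hu0 : ∀ m, 0 ≤ u m := fun m => (S.E_coe (hQXmem m) (hQX0 m) (hQX1 m)).2.1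
  have hu1 : ∀ m, u m ≤ 1 := fun m => (S.E_coe (hQXmem m) (hQX0 m) (hQX1 m)).2.2
  have hgXmem : ∀ k, 1 ≤ k → (fun ω => gfun c N k (X k ω)) ∈ S.H :=
    fun k hk => S.mem_comp1 (hH k hk) (1/c) (g_lip hc N k hk)
  set eps : ℕ → ℝ := fun k => (S.E (fun ω => gfun c N k (X k ω))).toReal with heps
  have hepscoe : ∀ k, 1 ≤ k → S.E (fun ω => gfun c N k (X k ω)) = ((eps k : ℝ) : EReal) :=
    fun k hk => (S.E_coe (hgXmem k hk) (fun ω => g_nonneg c N k _) (fun ω => g_le_one c N k _)).1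
  have heps0 : ∀ k, 1 ≤ k → 0 ≤ eps k :=
    fun k hk => (S.E_coe (hgXmem k hk) (fun ω => g_nonneg c N k _) (fun ω => g_le_one c N k _)).2.1
  have heps1 : ∀ k, 1 ≤ k → eps k ≤ 1 :=
    fun k hk => (S.E_coe (hgXmem k hk) (fun ω => g_nonneg c N k _) (fun ω => g_le_one c N k _)).2.2
  -- base cases
  have hu0' : u 0 = 0 := by
    have : (fun ω => 1 - Qfun c N 0 (fun j : Fin 0 => X ((j:ℕ)+1) ω)) = (fun _ => (0:ℝ)) := by
      funext ω
      simp [Qfun]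
    rw [hu]
    simp only [this, S.const_eq 0]
    simp
  have hu1' : u 1 = eps 1 := by
    have : (fun ω => 1 - Qfun c N 1 (fun j : Fin 1 => X ((j:ℕ)+1) ω))
        = (fun ω => gfun c N 1 (X 1 ω)) := by
      funext ω
      simp [Qfun]
    rw [hu, heps]
    simp only [this]
  -- recursion via independence
  have hrec : ∀ m, 1 ≤ m → u (m+1) = eps (m+1) + (1 - eps (m+1)) * u m := by
    intro m hm
    have hm1 : 1 ≤ m + 1 := Nat.le_add_left 1 m
    -- CLLip of the test function
    have hφlip : CLLip (fun z : Fin (m+1) → ℝ => 1 - Qfun c N (m+1) z) := by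
      refine clip_of_lip (((m+1:ℕ):ℝ)/c) (fun x y => ?_)
      have heq : (1 - Qfun c N (m+1) x) - (1 - Qfun c N (m+1) y)
          = -(Qfun c N (m+1) x - Qfun c N (m+1) y) := by ring
      rw [heq, abs_neg]
      exact Q_lip hc N (m+1) x y
    -- affine-in-g membership
    have hmemaff : ∀ a b : ℝ, (fun ω' => a + b * gfun c N (m+1) (X (m+1) ω')) ∈ S.H := by
      intro a b
      refine S.mem_comp1 (ψ := fun t => a + b * gfun c N (m+1) t) (hH (m+1) hm1)
        (|b| * (1/c)) (fun s t => ?_)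
      have heq : (a + b * gfun c N (m+1) s) - (a + b * gfun c N (m+1) t)
          = b * (gfun c N (m+1) s - gfun c N (m+1) t) := by ring
      rw [heq, abs_mul, mul_assoc]
      exact mul_le_mul_of_nonneg_left (g_lip hc N (m+1) hm1 s t) (abs_nonneg b)
    -- the inner expectation
    have hinner : ∀ p : ℝ, 0 ≤ p → p ≤ 1 →
        S.E (fun ω' => (1 - p) + p * gfun c N (m+1) (X (m+1) ω'))
          = ((1 - p * (1 - eps (m+1)) : ℝ) : EReal) := by
      intro p hp0 hp1
      rw [S.E_affine (hgXmem (m+1) hm1) (fun ω => g_nonneg c N (m+1) _)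
        (fun ω => g_le_one c N (m+1) _) (1-p) p hp0]
      rw [EReal.coe_eq_coe_iff]
      have hre : (S.E fun ω => gfun c N (m + 1) (X (m + 1) ω)).toReal = eps (m+1) := rfl
      rw [hre]
      ring
    -- conditions for independence
    have hcond1 : ∀ x : Fin m → ℝ,
        S.E (fun ω' => |1 - Qfun c N (m+1) (Fin.append x (fun _ : Fin 1 => X (m+1) ω'))|) ≠ ⊤ := by
      intro x
      have hfeq : (fun ω' => |1 - Qfun c N (m+1) (Fin.append x (fun _ : Fin 1 => X (m+1) ω'))|)
          = fun ω' => (1 - Qfun c N m x) + Qfun c N m x * gfun c N (m+1) (X (m+1) ω') := by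
        funext ω'
        rw [Q_split]
        have hQ0 := Q_nonneg c N m x
        have hQ1 := Q_le_one c N m x
        have hg0 := g_nonneg c N (m+1) (X (m+1) ω')
        have hg1 := g_le_one c N (m+1) (X (m+1) ω')
        rw [abs_of_nonneg (by nlinarith)]
        ring
      rw [hfeq]
      refine S.E_ne_top (hmemaff _ _) (b := 1) (fun ω' => ?_)
      have hQ0 := Q_nonneg c N m x
      have hQ1 := Q_le_one c N m x
      have hg0 := g_nonneg c N (m+1) (X (m+1) ω')
      have hg1 := g_le_one c N (m+1) (X (m+1) ω')
      nlinarith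
    -- inner expectation, at the random first coordinates
    have hInner : ∀ ω : Ω,
        S.E (fun ω' => 1 - Qfun c N (m+1)
            (Fin.append (fun j : Fin m => X ((j:ℕ)+1) ω) (fun _ : Fin 1 => X (m+1) ω')))
          = ((1 - Qfun c N m (fun j : Fin m => X ((j:ℕ)+1) ω) * (1 - eps (m+1)) : ℝ) : EReal) := by
      intro ω
      have hfeq : (fun ω' => 1 - Qfun c N (m+1)
            (Fin.append (fun j : Fin m => X ((j:ℕ)+1) ω) (fun _ : Fin 1 => X (m+1) ω')))
          = fun ω' => (1 - Qfun c N m (fun j : Fin m => X ((j:ℕ)+1) ω))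
              + Qfun c N m (fun j : Fin m => X ((j:ℕ)+1) ω) * gfun c N (m+1) (X (m+1) ω') := by
        funext ω'
        rw [Q_split]
        ring
      rw [hfeq, hinner _ (Q_nonneg c N m _) (Q_le_one c N m _)]
    have hcond2 :
        S.E (fun ω => |(S.E (fun ω' => |1 - Qfun c N (m+1)
            (Fin.append (fun j : Fin m => X ((j:ℕ)+1) ω) (fun _ : Fin 1 => X (m+1) ω'))|)).toReal|) ≠ ⊤ := by
      have hfeq2 : (fun ω => |(S.E (fun ω' => |1 - Qfun c N (m+1)
            (Fin.append (fun j : Fin m => X ((j:ℕ)+1) ω) (fun _ : Fin 1 => X (m+1) ω'))|)).toReal|)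
          = fun ω => eps (m+1) + (1 - eps (m+1)) *
              (1 - Qfun c N m (fun j : Fin m => X ((j:ℕ)+1) ω)) := by
        funext ω
        have habs : (fun ω' => |1 - Qfun c N (m+1)
            (Fin.append (fun j : Fin m => X ((j:ℕ)+1) ω) (fun _ : Fin 1 => X (m+1) ω'))|)
            = fun ω' => 1 - Qfun c N (m+1)
              (Fin.append (fun j : Fin m => X ((j:ℕ)+1) ω) (fun _ : Fin 1 => X (m+1) ω')) := by
          funext ω'
          rw [Q_split]
          have hQ0 := Q_nonneg c N m (fun j : Fin m => X ((j:ℕ)+1) ω)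
          have hQ1 := Q_le_one c N m (fun j : Fin m => X ((j:ℕ)+1) ω)
          have hg0 := g_nonneg c N (m+1) (X (m+1) ω')
          have hg1 := g_le_one c N (m+1) (X (m+1) ω')
          rw [abs_of_nonneg (by nlinarith)]
        rw [habs, hInner ω]
        have hQ0 := Q_nonneg c N m (fun j : Fin m => X ((j:ℕ)+1) ω)
        have hQ1 := Q_le_one c N m (fun j : Fin m => X ((j:ℕ)+1) ω)
        have hε0 := heps0 (m+1) hm1
        have hε1 := heps1 (m+1) hm1
        rw [EReal.toReal_coe, abs_of_nonneg (by nlinarith)]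
        ring
      rw [hfeq2]
      have hmem2 : (fun ω => eps (m+1) + (1 - eps (m+1)) *
          (1 - Qfun c N m (fun j : Fin m => X ((j:ℕ)+1) ω))) ∈ S.H := by
        refine S.comp_mem (fun j : Fin m => X ((j:ℕ)+1))
          (fun x => eps (m+1) + (1 - eps (m+1)) * (1 - Qfun c N m x)) (hXmem m)
          (clip_of_lip (|1 - eps (m+1)| * ((m:ℝ)/c)) (fun x y => ?_))
        have heq : (eps (m+1) + (1 - eps (m+1)) * (1 - Qfun c N m x))
            - (eps (m+1) + (1 - eps (m+1)) * (1 - Qfun c N m y))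
            = (1 - eps (m+1)) * (Qfun c N m y - Qfun c N m x) := by ring
        rw [heq, abs_mul, mul_assoc]
        refine mul_le_mul_of_nonneg_left ?_ (abs_nonneg _)
        rw [abs_sub_comm]
        exact Q_lip hc N m x y
      refine S.E_ne_top hmem2 (b := 1) (fun ω => ?_)
      have hQ0 := Q_nonneg c N m (fun j : Fin m => X ((j:ℕ)+1) ω)
      have hQ1 := Q_le_one c N m (fun j : Fin m => X ((j:ℕ)+1) ω)
      have hε0 := heps0 (m+1) hm1
      have hε1 := heps1 (m+1) hm1
      nlinarith
    -- apply independence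
    have hidd := hind m hm (fun z : Fin (m+1) → ℝ => 1 - Qfun c N (m+1) z) hφlip hcond1 hcond2
    have hidd' : S.E (fun ω => 1 - Qfun c N (m+1)
          (Fin.append (fun j : Fin m => X ((j:ℕ)+1) ω) (fun _ : Fin 1 => X (m+1) ω)))
        = S.E (fun ω => (S.E (fun ω' => 1 - Qfun c N (m+1)
          (Fin.append (fun j : Fin m => X ((j:ℕ)+1) ω) (fun _ : Fin 1 => X (m+1) ω')))).toReal) :=
      hidd
    -- identify the left side
    have happ : ∀ ω : Ω, (Fin.append (fun j : Fin m => X ((j:ℕ)+1) ω)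
        (fun _ : Fin 1 => X (m+1) ω)) = fun j : Fin (m+1) => X ((j:ℕ)+1) ω := by
      intro ω
      funext j
      refine Fin.addCases (fun i => ?_) (fun i => ?_) j
      · rw [Fin.append_left]
        simp
      · rw [Fin.append_right]
        have h1 : i = 0 := Subsingleton.elim i 0
        subst h1
        simp
    have hLeq : (fun ω => 1 - Qfun c N (m+1)
          (Fin.append (fun j : Fin m => X ((j:ℕ)+1) ω) (fun _ : Fin 1 => X (m+1) ω)))
        = fun ω => 1 - Qfun c N (m+1) (fun j : Fin (m+1) => X ((j:ℕ)+1) ω) := by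
      funext ω
      rw [happ ω]
    have hReq : (fun ω => (S.E (fun ω' => 1 - Qfun c N (m+1)
          (Fin.append (fun j : Fin m => X ((j:ℕ)+1) ω) (fun _ : Fin 1 => X (m+1) ω')))).toReal)
        = fun ω => eps (m+1) + (1 - eps (m+1)) *
            (1 - Qfun c N m (fun j : Fin m => X ((j:ℕ)+1) ω)) := by
      funext ω
      rw [hInner ω, EReal.toReal_coe]
      ring
    rw [hLeq, hReq] at hidd'
    -- compute the right side with E_affine
    have hε0 := heps0 (m+1) hm1
    have hε1 := heps1 (m+1) hm1
    have hRcomp : S.E (fun ω => eps (m+1) + (1 - eps (m+1)) *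
          (1 - Qfun c N m (fun j : Fin m => X ((j:ℕ)+1) ω)))
        = ((eps (m+1) + (1 - eps (m+1)) * u m : ℝ) : EReal) := by
      rw [S.E_affine (hQXmem m) (hQX0 m) (hQX1 m) (eps (m+1)) (1 - eps (m+1)) (by linarith)]
    rw [hRcomp] at hidd'
    have h1 := hucoe (m+1)
    rw [hidd'] at h1
    exact_mod_cast h1.symm
  -- product formula
  have huform : ∀ m, 1 - u m = ∏ k ∈ Finset.range m, (1 - eps (k+1)) := by
    intro m
    induction m with
    | zero => simp [hu0']
    | succ m ih =>
      rcases Nat.eq_zero_or_pos m with hm | hm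
      · subst hm
        simp [hu1']
      · rw [Finset.prod_range_succ, ← ih, hrec m hm]
        ring
  -- comparison with capacities
  have hepsge : ∀ k : ℕ,
      (if k + 1 ≤ N then 0 else (S.V {ω | 2*c*((k:ℝ)+1) ≤ |X 1 ω|}).toReal) ≤ eps (k+1) := by
    intro k
    split
    · exact heps0 (k+1) (Nat.le_add_left 1 k)
    · next hNk =>
      have hNk' : N < k + 1 := Nat.lt_of_not_le hNk
      have hk1 : 1 ≤ k + 1 := Nat.le_add_left 1 k
      -- identical distribution
      have hidk : S.E (fun ω => gfun c N (k+1) (X (k+1) ω))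
          = S.E (fun ω => gfun c N (k+1) (X 1 ω)) := by
        have := hid (k+1) hk1 (fun v : Fin 1 → ℝ => gfun c N (k+1) (v 0)) ?_
        · exact this
        · refine clip_of_lip (1/c) (fun x y => ?_)
          refine (g_lip hc N (k+1) hk1 (x 0) (y 0)).trans ?_
          have hxy : |x 0 - y 0| ≤ ‖x - y‖ := by
            have := norm_le_pi_norm (x - y) 0
            simpa using this
          have hc' : (0:ℝ) ≤ 1/c := by positivity
          nlinarith
      have hmem1 : (fun ω => gfun c N (k+1) (X 1 ω)) ∈ S.H :=
        S.mem_comp1 (hH 1 le_rfl) (1/c) (g_lip hc N (k+1) hk1)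
      have hVle : S.V {ω | 2*c*((k:ℝ)+1) ≤ |X 1 ω|} ≤ S.E (fun ω => gfun c N (k+1) (X 1 ω)) := by
        refine S.V_le_E hmem1 (fun ω => ?_)
        rw [Set.indicator_apply]
        split
        · next hω =>
          have hω' : 2*c*((k+1 : ℕ):ℝ) ≤ |X 1 ω| := by
            push_cast
            exact hω
          rw [g_one hc N (k+1) hNk' _ hω']
        · exact g_nonneg c N (k+1) _
      rw [← hidk, hepscoe (k+1) hk1] at hVle
      rw [S.V_coe] at hVle
      exact_mod_cast hVle
  -- lower bound for the capacity of the union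
  set U : Set Ω := ⋃ k : ℕ, {ω | N < k + 1 ∧ c*((k:ℝ)+1) < |X (k+1) ω|} with hU
  have hVU : ∀ m : ℕ, ((u m : ℝ) : EReal) ≤ S.V U := by
    intro m
    rw [← hucoe m]
    refine S.E_le_V (hQXmem m) (fun ω => ?_)
    rw [Set.indicator_apply]
    split
    · next hω => linarith [Q_nonneg c N m (fun j : Fin m => X ((j:ℕ)+1) ω)]
    · next hω =>
      have hQone : Qfun c N m (fun j : Fin m => X ((j:ℕ)+1) ω) = 1 := by
        unfold Qfun
        refine Finset.prod_eq_one (fun j _ => ?_)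
        have hg : gfun c N ((j:ℕ)+1) (X ((j:ℕ)+1) ω) = 0 := by
          by_contra hne
          obtain ⟨hN1, hc1⟩ := g_supp hc N ((j:ℕ)+1) _ hne
          exact hω (Set.mem_iUnion.mpr ⟨(j:ℕ), ⟨hN1, by push_cast at hc1 ⊢; exact hc1⟩⟩)
        rw [hg]
        ring
      rw [hQone]
      norm_num
  -- conclude V U = 1
  have hVUcoe := S.V_coe U
  have hV1 : ∀ δ : ℝ, 0 < δ → 1 - δ ≤ (S.V U).toReal := by
    intro δ hδ
    obtain ⟨m, hm⟩ := hdiv (-Real.log δ)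
    have hsum_le : -Real.log δ ≤ ∑ k ∈ Finset.range m, eps (k+1) :=
      hm.trans (Finset.sum_le_sum (fun k _ => hepsge k))
    have hprod : 1 - u m ≤ δ := by
      rw [huform m]
      have h1 : ∏ k ∈ Finset.range m, (1 - eps (k+1))
          ≤ Real.exp (-∑ k ∈ Finset.range m, eps (k+1)) :=
        prod_one_sub_le_exp _ _ (fun k _ => heps0 (k+1) (Nat.le_add_left 1 k))
          (fun k _ => heps1 (k+1) (Nat.le_add_left 1 k))
      refine h1.trans ?_
      have h2 : -∑ k ∈ Finset.range m, eps (k+1) ≤ Real.log δ := by linarith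
      calc Real.exp (-∑ k ∈ Finset.range m, eps (k+1)) ≤ Real.exp (Real.log δ) :=
            Real.exp_le_exp.mpr h2
        _ = δ := Real.exp_log hδ
    have hum : u m ≤ (S.V U).toReal := by
      have := hVU m
      rw [hVUcoe] at this
      exact_mod_cast this
    linarith
  have h1le : (1:ℝ) ≤ (S.V U).toReal := one_le_of_forall_sub hV1
  have hle1 := S.V_toReal_le_one U
  have : (S.V U).toReal = 1 := le_antisymm hle1 h1le
  rw [hVUcoe, this]
  norm_num

end Key
section Divergence

lemma erealToENNReal_mono {x y : EReal} (h : x ≤ y) : erealToENNReal x ≤ erealToENNReal y := by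
  unfold erealToENNReal
  split
  · next hx =>
    subst hx
    have : y = ⊤ := top_le_iff.mp h
    rw [if_pos this]
  · next hx =>
    split
    · exact le_top
    · next hy =>
      rcases eq_or_ne x ⊥ with hb | hb
      · subst hb
        simp
      · exact ENNReal.ofReal_le_ofReal (EReal.toReal_le_toReal h hb hy)

lemma erealToENNReal_le_one {x : EReal} (h : x ≤ 1) : erealToENNReal x ≤ 1 := by
  have h1 : erealToENNReal x ≤ erealToENNReal 1 := erealToENNReal_mono h
  have : erealToENNReal 1 = 1 := by
    unfold erealToENNReal
    have hne : (1 : EReal) ≠ ⊤ := by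
      intro hcon
      exact absurd hcon.symm (ne_of_beq_false rfl)
    rw [if_neg hne, EReal.toReal_one, ENNReal.ofReal_one]
  rwa [this] at h1

lemma erealToENNReal_toReal {x : EReal} (h0 : 0 ≤ x) (h1 : x ≠ ⊤) :
    (erealToENNReal x).toReal = x.toReal := by
  unfold erealToENNReal
  rw [if_neg h1]
  rw [ENNReal.toReal_ofReal]
  have := EReal.toReal_le_toReal h0 (by simp) h1
  simpa using this

lemma real_partial_of_tsum_top (T : ℕ → ℝ≥0∞) (hT : ∀ k, T k ≤ 1) (h : ∑' k, T k = ⊤) :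
    ∀ R : ℝ, ∃ m : ℕ, R ≤ ∑ k ∈ Finset.range m, (T k).toReal := by
  intro R
  rcases le_or_gt R 0 with hR | hR
  · exact ⟨0, by simpa using hR⟩
  rw [ENNReal.tsum_eq_iSup_sum] at h
  have hlt : ENNReal.ofReal R < ⨆ s : Finset ℕ, ∑ k ∈ s, T k := by
    rw [h]; exact ENNReal.ofReal_lt_top
  obtain ⟨s, hs⟩ := lt_iSup_iff.mp hlt
  refine ⟨s.sup id + 1, ?_⟩
  have hsub : s ⊆ Finset.range (s.sup id + 1) := by
    intro i hi
    rw [Finset.mem_range]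
    exact Nat.lt_succ_of_le (Finset.le_sup (f := id) hi)
  have hle : ENNReal.ofReal R < ∑ k ∈ Finset.range (s.sup id + 1), T k :=
    hs.trans_le (Finset.sum_le_sum_of_subset hsub)
  have hne : ∀ k ∈ Finset.range (s.sup id + 1), T k ≠ ⊤ :=
    fun k _ => (lt_of_le_of_lt (hT k) (by norm_num)).ne
  have hfin : ∑ k ∈ Finset.range (s.sup id + 1), T k ≠ ⊤ := by
    rw [← lt_top_iff_ne_top]
    exact ENNReal.sum_lt_top.mpr (fun k hk => lt_top_iff_ne_top.mpr (hne k hk))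
  have := ENNReal.toReal_lt_toReal (by simp) hfin |>.mpr hle
  rw [ENNReal.toReal_ofReal hR.le, ENNReal.toReal_sum hne] at this
  exact this.le

/-- divergence is preserved when finitely many (at most `N+1`, those with `k+1 ≤ N`)
terms bounded by 1 are replaced by `0`. -/
lemma div_tail (a : ℕ → ℝ) (h0 : ∀ k, 0 ≤ a k) (h1 : ∀ k, a k ≤ 1)
    (hdiv : ∀ R : ℝ, ∃ m : ℕ, R ≤ ∑ k ∈ Finset.range m, a k) (N : ℕ) :
    ∀ R : ℝ, ∃ m : ℕ, R ≤ ∑ k ∈ Finset.range m, (if k + 1 ≤ N then 0 else a k) := by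
  intro R
  obtain ⟨m, hm⟩ := hdiv (R + N)
  refine ⟨m, ?_⟩
  have hsplit : ∀ k, a k ≤ (if k + 1 ≤ N then 0 else a k) + (if k ∈ Finset.range N then (1:ℝ) else 0) := by
    intro k
    by_cases hk : k + 1 ≤ N
    · rw [if_pos hk, if_pos (Finset.mem_range.mpr hk)]
      linarith [h1 k]
    · rw [if_neg hk]
      have : ¬ (k ∈ Finset.range N) := by
        rw [Finset.mem_range]
        omega
      rw [if_neg this]
      linarith
  have hb : ∑ k ∈ Finset.range m, a k ≤
      (∑ k ∈ Finset.range m, (if k + 1 ≤ N then 0 else a k)) +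
      ∑ k ∈ Finset.range m, (if k ∈ Finset.range N then (1:ℝ) else 0) := by
    rw [← Finset.sum_add_distrib]
    exact Finset.sum_le_sum (fun k _ => hsplit k)
  have hcard : ∑ k ∈ Finset.range m, (if k ∈ Finset.range N then (1:ℝ) else 0) ≤ N := by
    rw [Finset.sum_ite_mem]
    rw [Finset.sum_const]
    have : ((Finset.range m ∩ Finset.range N).card : ℝ) ≤ N := by
      have h := Finset.card_le_card (Finset.inter_subset_right (s₁ := Finset.range m) (s₂ := Finset.range N))
      rw [Finset.card_range] at h
      exact_mod_cast h
    simpa using this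
  linarith

/-- index-shift: divergence of `∑ a k` gives divergence of `∑ a (k+1)` when terms are `≤ 1`. -/
lemma div_shift (a : ℕ → ℝ) (h1 : ∀ k, a k ≤ 1)
    (hdiv : ∀ R : ℝ, ∃ m : ℕ, R ≤ ∑ k ∈ Finset.range m, a k) :
    ∀ R : ℝ, ∃ m : ℕ, R ≤ ∑ k ∈ Finset.range m, a (k+1) := by
  intro R
  obtain ⟨m, hm⟩ := hdiv (R + 1)
  match m with
  | 0 =>
    refine ⟨0, ?_⟩
    simp only [Finset.range_zero, Finset.sum_empty] at hm ⊢
    linarith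
  | Nat.succ M =>
    refine ⟨M, ?_⟩
    rw [Finset.sum_range_succ'] at hm
    have := h1 0
    linarith

end Divergence

open MeasureTheory

/-- **Strong law of large numbers, converse part (Theorem 3(b)).**
Let `{X_n ; n ≥ 1}` be independent and identically distributed random variables and `V`
the capacity generated by `E`. If `V` is continuous (from below and from above) and
`V(limsup |S_n|/n = +∞) < 1`, then `C_V[|X_1|] < ∞`. -/
theorem slln_converse_part {Ω : Type*} (S : SLE Ω) (X : ℕ → Ω → ℝ)
    (hH : ∀ i, 1 ≤ i → X i ∈ S.H)
    (hid : S.IdentDistrib X)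
    (hind : S.IndepSeq X)
    (hVbelow : ∀ A : ℕ → Set Ω, Monotone A → S.V (⋃ i, A i) = ⨆ i, S.V (A i))
    (hVabove : ∀ A : ℕ → Set Ω, Antitone A → S.V (⋂ i, A i) = ⨅ i, S.V (A i))
    (hlt : S.V {ω | Filter.limsup
        (fun n : ℕ => ((|∑ k ∈ Finset.Icc 1 n, X k ω| / n : ℝ) : EReal)) atTop = ⊤} < 1) :
    S.choquet (fun ω => |X 1 ω|) < ⊤ := by
  classical
  -- V of the whole space is 1
  have hVuniv : S.V (Set.univ : Set Ω) = 1 := by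
    refine le_antisymm (S.V_le_one _) ?_
    have h1 : S.E (fun _ => (1:ℝ)) ≤ S.V (Set.univ : Set Ω) :=
      S.E_le_V (S.const_mem 1) (fun ω => by simp)
    rwa [S.const_eq 1] at h1
  -- the second (negative-part) integral vanishes
  have hI2 : (∫⁻ t in Set.Iio (0:ℝ),
      erealToENNReal (1 - S.V {ω | t ≤ |X 1 ω|}) : ℝ≥0∞) = 0 := by
    refine le_antisymm ?_ zero_le
    have hzero : ∀ t ∈ Set.Iio (0:ℝ),
        erealToENNReal (1 - S.V {ω | t ≤ |X 1 ω|}) ≤ (fun _ => (0:ℝ≥0∞)) t := by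
      intro t ht
      have huniv : {ω | t ≤ |X 1 ω|} = (Set.univ : Set Ω) := by
        ext ω
        simp only [Set.mem_setOf_eq, Set.mem_univ, iff_true]
        exact le_trans (le_of_lt ht) (abs_nonneg _)
      rw [huniv, hVuniv]
      have hsub : (1 : EReal) - 1 = ((0:ℝ) : EReal) := by
        rw [show (1 : EReal) = ((1:ℝ) : EReal) by norm_cast, ← EReal.coe_sub]
        norm_num
      rw [hsub]
      unfold erealToENNReal
      rw [if_neg (by simp)]
      simp
    calc (∫⁻ t in Set.Iio (0:ℝ), erealToENNReal (1 - S.V {ω | t ≤ |X 1 ω|}) : ℝ≥0∞)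
        ≤ ∫⁻ _t in Set.Iio (0:ℝ), (0:ℝ≥0∞) := setLIntegral_mono measurable_const hzero
      _ = 0 := by simp
  -- reduce to showing the first integral is finite
  unfold SLE.choquet
  rw [hI2]
  rw [show ((0:ℝ≥0∞) : EReal) = (0 : EReal) by simp]
  rw [sub_eq_add_neg, neg_zero, add_zero]
  by_contra hnot
  push_neg at hnot
  have hI1 : (∫⁻ t in Set.Ioi (0:ℝ),
      erealToENNReal (S.V {ω | t ≤ |X 1 ω|}) : ℝ≥0∞) = ⊤ := by
    have h1 : ((∫⁻ t in Set.Ioi (0:ℝ),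
        erealToENNReal (S.V {ω | t ≤ |X 1 ω|}) : ℝ≥0∞) : EReal) = ⊤ := top_le_iff.mp hnot
    rwa [EReal.coe_ennreal_eq_top_iff] at h1
  -- divergence of the capacity series for every c > 0
  have hsum : ∀ c : ℝ, 0 < c →
      (∑' m : ℕ, erealToENNReal (S.V {ω | c * (m:ℝ) ≤ |X 1 ω|})) = ⊤ := by
    intro c hc
    set F : ℝ → ℝ≥0∞ := fun t => erealToENNReal (S.V {ω | t ≤ |X 1 ω|}) with hF
    have hcover : Set.Ioi (0:ℝ) ⊆ ⋃ m : ℕ, Set.Ioc (c*(m:ℝ)) (c*((m:ℝ)+1)) := by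
      intro t ht
      simp only [Set.mem_Ioi] at ht
      have htc : 0 < t / c := div_pos ht hc
      have hn1 : 1 ≤ ⌈t/c⌉₊ := Nat.one_le_iff_ne_zero.mpr (by
        intro h0
        have := Nat.ceil_eq_zero.mp h0
        linarith)
      refine Set.mem_iUnion.mpr ⟨⌈t/c⌉₊ - 1, ?_⟩
      simp only [Set.mem_Ioc]
      have hmn : ((⌈t/c⌉₊ - 1 : ℕ) : ℝ) = (⌈t/c⌉₊ : ℝ) - 1 := by
        push_cast [Nat.cast_sub hn1]
        ring
      constructor
      · have hlt2 : ((⌈t/c⌉₊ - 1 : ℕ) : ℝ) < t / c := Nat.lt_ceil.mp (by omega)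
        calc c * ((⌈t/c⌉₊ - 1 : ℕ) : ℝ) < c * (t/c) := mul_lt_mul_of_pos_left hlt2 hc
          _ = t := by field_simp
      · have hle : t / c ≤ (⌈t/c⌉₊ : ℝ) := Nat.le_ceil (t/c)
        have h2 : t ≤ c * (⌈t/c⌉₊ : ℝ) := by
          rw [div_le_iff₀ hc] at hle
          linarith
        rw [hmn]
        calc t ≤ c * (⌈t/c⌉₊ : ℝ) := h2
          _ = c * ((⌈t/c⌉₊ : ℝ) - 1 + 1) := by ring
    have hstep : ∀ m : ℕ, (∫⁻ t in Set.Ioc (c*(m:ℝ)) (c*((m:ℝ)+1)), F t : ℝ≥0∞)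
        ≤ F (c*(m:ℝ)) * ENNReal.ofReal c := by
      intro m
      have hmono : ∀ t ∈ Set.Ioc (c*(m:ℝ)) (c*((m:ℝ)+1)), F t ≤ (fun _ => F (c*(m:ℝ))) t := by
        intro t ht
        simp only [Set.mem_Ioc] at ht
        refine erealToENNReal_mono (S.V_mono (fun ω hω => ?_))
        simp only [Set.mem_setOf_eq] at hω ⊢
        linarith [ht.1]
      calc (∫⁻ t in Set.Ioc (c*(m:ℝ)) (c*((m:ℝ)+1)), F t : ℝ≥0∞)
          ≤ ∫⁻ _t in Set.Ioc (c*(m:ℝ)) (c*((m:ℝ)+1)), F (c*(m:ℝ)) :=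
            setLIntegral_mono measurable_const hmono
        _ = F (c*(m:ℝ)) * volume (Set.Ioc (c*(m:ℝ)) (c*((m:ℝ)+1))) := setLIntegral_const _ _
        _ = F (c*(m:ℝ)) * ENNReal.ofReal c := by
            rw [Real.volume_Ioc]
            congr 1
            ring_nf
    have hchain : (⊤:ℝ≥0∞) ≤ (∑' m : ℕ, F (c*(m:ℝ))) * ENNReal.ofReal c := by
      calc (⊤:ℝ≥0∞) = ∫⁻ t in Set.Ioi (0:ℝ), F t := hI1.symm
        _ ≤ ∫⁻ t in ⋃ m : ℕ, Set.Ioc (c*(m:ℝ)) (c*((m:ℝ)+1)), F t := lintegral_mono_set hcover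
        _ ≤ ∑' m : ℕ, ∫⁻ t in Set.Ioc (c*(m:ℝ)) (c*((m:ℝ)+1)), F t := lintegral_iUnion_le _ _
        _ ≤ ∑' m : ℕ, F (c*(m:ℝ)) * ENNReal.ofReal c :=
            ENNReal.tsum_le_tsum (fun m => hstep m)
        _ = (∑' m : ℕ, F (c*(m:ℝ))) * ENNReal.ofReal c := ENNReal.tsum_mul_right
    by_contra hne
    have hfin : (∑' m : ℕ, F (c*(m:ℝ))) * ENNReal.ofReal c ≠ ⊤ :=
      ENNReal.mul_ne_top hne ENNReal.ofReal_ne_top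
    exact hfin (top_le_iff.mp hchain)
  -- the divergence hypothesis needed by `key_capacity`
  have hdivkey : ∀ c : ℝ, 0 < c → ∀ N : ℕ, ∀ R : ℝ, ∃ m : ℕ, R ≤ ∑ k ∈ Finset.range m,
      (if k + 1 ≤ N then 0 else (S.V {ω | 2*c*((k:ℝ)+1) ≤ |X 1 ω|}).toReal) := by
    intro c hc N
    set T : ℕ → ℝ≥0∞ := fun m => erealToENNReal (S.V {ω | 2*c*(m:ℝ) ≤ |X 1 ω|}) with hT
    have hT1 : ∀ m, T m ≤ 1 := fun m => erealToENNReal_le_one (S.V_le_one _)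
    have hTtop : ∑' m, T m = ⊤ := hsum (2*c) (by linarith)
    have hTtoReal : ∀ m : ℕ, (T m).toReal = (S.V {ω | 2*c*(m:ℝ) ≤ |X 1 ω|}).toReal :=
      fun m => erealToENNReal_toReal (S.V_nonneg _) (S.V_ne_top _)
    have hdiv0 : ∀ R : ℝ, ∃ m : ℕ, R ≤ ∑ k ∈ Finset.range m, (T k).toReal :=
      real_partial_of_tsum_top T hT1 hTtop
    have haux1 : ∀ k, (T k).toReal ≤ 1 := by
      intro k
      have := ENNReal.toReal_mono (by norm_num) (hT1 k)
      simpa using this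
    have hdiv1 : ∀ R : ℝ, ∃ m : ℕ, R ≤ ∑ k ∈ Finset.range m, (T (k+1)).toReal :=
      div_shift (fun k => (T k).toReal) haux1 hdiv0
    have hset : ∀ k : ℕ, {ω | 2*c*((k+1:ℕ):ℝ) ≤ |X 1 ω|} = {ω | 2*c*((k:ℝ)+1) ≤ |X 1 ω|} := by
      intro k
      have hc' : ((k+1:ℕ):ℝ) = (k:ℝ)+1 := by push_cast; ring
      rw [hc']
    have hdiv2 : ∀ R : ℝ, ∃ m : ℕ, R ≤ ∑ k ∈ Finset.range m,
        (S.V {ω | 2*c*((k:ℝ)+1) ≤ |X 1 ω|}).toReal := by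
      intro R
      obtain ⟨m, hm⟩ := hdiv1 R
      refine ⟨m, hm.trans (le_of_eq (Finset.sum_congr rfl (fun k _ => ?_)))⟩
      rw [hTtoReal (k+1), hset k]
    exact div_tail _ (fun k => S.V_toReal_nonneg _) (fun k => S.V_toReal_le_one _) hdiv2 N
  -- the union events have capacity one
  set D : ℝ → ℕ → Set Ω :=
    fun c N => ⋃ k : ℕ, {ω | N < k + 1 ∧ c*((k:ℝ)+1) < |X (k+1) ω|} with hD
  have hVone : ∀ c : ℝ, 0 < c → ∀ N : ℕ, S.V (D c N) = 1 := by
    intro c hc N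
    exact key_capacity S X hH hid hind hc N (hdivkey c hc N)
  -- intersect over N
  have hDanti : ∀ c : ℝ, Antitone (D c) := by
    intro c N N' hNN'
    refine Set.iUnion_mono (fun k => ?_)
    intro ω hω
    exact ⟨lt_of_le_of_lt hNN' hω.1, hω.2⟩
  have hVG : ∀ n : ℕ, S.V (⋂ N, D ((n:ℝ)+1) N) = 1 := by
    intro n
    have hpos : (0:ℝ) < (n:ℝ)+1 := by positivity
    rw [hVabove (fun N => D ((n:ℝ)+1) N) (hDanti _)]
    have heq : (fun N : ℕ => S.V (D ((n:ℝ)+1) N)) = fun _ => (1:EReal) :=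
      funext (fun N => hVone _ hpos N)
    rw [heq, iInf_const]
  -- intersect over c = n+1
  set G : ℕ → Set Ω := fun n => ⋂ N, D ((n:ℝ)+1) N with hG
  have hGanti : Antitone G := by
    intro n n' hnn'
    refine Set.iInter_mono (fun N => ?_)
    refine Set.iUnion_mono (fun k => ?_)
    intro ω hω
    refine ⟨hω.1, lt_of_le_of_lt ?_ hω.2⟩
    have h1 : ((n:ℝ)+1) ≤ ((n':ℝ)+1) := by
      have : (n:ℝ) ≤ (n':ℝ) := by exact_mod_cast hnn'
      linarith
    have h2 : (0:ℝ) ≤ (k:ℝ)+1 := by positivity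
    nlinarith [hω.2]
  have hVGG : S.V (⋂ n, G n) = 1 := by
    rw [hVabove G hGanti]
    have heq : (fun n : ℕ => S.V (G n)) = fun _ => (1:EReal) := funext (fun n => hVG n)
    rw [heq, iInf_const]
  -- the intersection is contained in the limsup event
  have hincl : (⋂ n, G n) ⊆ {ω | Filter.limsup
      (fun n : ℕ => ((|∑ k ∈ Finset.Icc 1 n, X k ω| / n : ℝ) : EReal)) atTop = ⊤} := by
    intro ω hω
    simp only [Set.mem_setOf_eq]
    set f : ℕ → EReal := fun n => ((|∑ k ∈ Finset.Icc 1 n, X k ω| / n : ℝ) : EReal) with hf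
    have hfreq : ∀ n : ℕ, ∀ Nb : ℕ, ∃ M : ℕ, Nb ≤ M ∧ ((((n:ℝ)+1)/2 : ℝ) : EReal) ≤ f M := by
      intro n Nb
      have hωn : ω ∈ G n := Set.mem_iInter.mp hω n
      have hωN : ω ∈ D ((n:ℝ)+1) (Nb+1) := Set.mem_iInter.mp hωn (Nb+1)
      obtain ⟨k, hk⟩ := Set.mem_iUnion.mp hωN
      obtain ⟨hk1, hk2⟩ := hk
      have hkge : Nb + 1 ≤ k := by omega
      have hkpos : (0:ℝ) < (k:ℝ)+1 := by positivity
      have hkpos' : (0:ℝ) < (k:ℝ) := by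
        have h1 : 1 ≤ k := by omega
        have : (1:ℝ) ≤ (k:ℝ) := by exact_mod_cast h1
        linarith
      have hsplit : ∑ j ∈ Finset.Icc 1 (k+1), X j ω
          = (∑ j ∈ Finset.Icc 1 k, X j ω) + X (k+1) ω :=
        Finset.sum_Icc_succ_top (Nat.le_add_left 1 k) _
      have htri : |X (k+1) ω| ≤
          |∑ j ∈ Finset.Icc 1 (k+1), X j ω| + |∑ j ∈ Finset.Icc 1 k, X j ω| := by
        have h1 : X (k+1) ω
            = (∑ j ∈ Finset.Icc 1 (k+1), X j ω) - (∑ j ∈ Finset.Icc 1 k, X j ω) := by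
          rw [hsplit]; ring
        rw [h1]
        exact abs_sub _ _
      by_cases hcase :
          ((n:ℝ)+1) * ((k:ℝ)+1) / 2 ≤ |∑ j ∈ Finset.Icc 1 (k+1), X j ω|
      · refine ⟨k+1, by omega, ?_⟩
        show ((((n:ℝ)+1)/2 : ℝ) : EReal)
            ≤ ((|∑ j ∈ Finset.Icc 1 (k+1), X j ω| / ((k+1:ℕ):ℝ) : ℝ) : EReal)
        apply EReal.coe_le_coe_iff.mpr
        have hcast : ((k+1 : ℕ):ℝ) = (k:ℝ)+1 := by push_cast; ring
        rw [hcast, le_div_iff₀ hkpos]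
        nlinarith
      · push_neg at hcase
        have hAbig : ((n:ℝ)+1) * ((k:ℝ)+1) / 2 ≤ |∑ j ∈ Finset.Icc 1 k, X j ω| := by
          have hn0 : (0:ℝ) ≤ (n:ℝ)+1 := by positivity
          nlinarith [hk2, htri]
        refine ⟨k, by omega, ?_⟩
        show ((((n:ℝ)+1)/2 : ℝ) : EReal)
            ≤ ((|∑ j ∈ Finset.Icc 1 k, X j ω| / ((k:ℕ):ℝ) : ℝ) : EReal)
        apply EReal.coe_le_coe_iff.mpr
        rw [le_div_iff₀ hkpos']
        have hn0 : (0:ℝ) ≤ (n:ℝ)+1 := by positivity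
        nlinarith
    have hbdd : Filter.IsBoundedUnder (· ≤ ·) Filter.atTop f :=
      Filter.isBoundedUnder_of ⟨⊤, fun x => le_top⟩
    have hlimsup_ge : ∀ n : ℕ, ((((n:ℝ)+1)/2 : ℝ) : EReal) ≤ Filter.limsup f Filter.atTop := by
      intro n
      refine Filter.le_limsup_of_frequently_le ?_ hbdd
      rw [Filter.frequently_atTop]
      intro Nb
      obtain ⟨M, hM1, hM2⟩ := hfreq n Nb
      exact ⟨M, hM1, hM2⟩
    by_contra hne
    have hnebot : Filter.limsup f Filter.atTop ≠ ⊥ := by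
      intro hbot
      have h0 := hlimsup_ge 0
      rw [hbot] at h0
      exact (EReal.bot_lt_coe _).not_ge h0
    have hcoe : ((Filter.limsup f Filter.atTop).toReal : EReal) = Filter.limsup f Filter.atTop :=
      EReal.coe_toReal hne hnebot
    obtain ⟨n, hn⟩ := exists_nat_gt (2 * (Filter.limsup f Filter.atTop).toReal)
    have h2 := hlimsup_ge n
    rw [← hcoe] at h2
    have hle : ((n:ℝ)+1)/2 ≤ (Filter.limsup f Filter.atTop).toReal := EReal.coe_le_coe_iff.mp h2
    linarith
  -- contradiction
  have hfinal : (1 : EReal) ≤ S.V {ω | Filter.limsup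
      (fun n : ℕ => ((|∑ k ∈ Finset.Icc 1 n, X k ω| / n : ℝ) : EReal)) atTop = ⊤} := by
    rw [← hVGG]
    exact S.V_mono hincl
  exact absurd (lt_of_le_of_lt hfinal hlt) (lt_irrefl _)
end
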